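/- arXiv:1405.0480 — 5 statements merged into one kernel-verified Lean document; each statement's English description precedes it below -/
import Mathlib

section
/- Let Q₁ = N(μ₁, σ₁²) and Q₂ = N(μ₂, σ₂²) be Gaussian measures on ℝ with σ₁, σ₂ > 0. Then ‖Q₁ - Q₂‖_TV ≤ √((1 - σ₁/σ₂)² + (μ₁ - μ₂)²/(2σ₂²)). -/
open MeasureTheory ProbabilityTheory Real

open scoped NNReal ENNReal

lemma abs_setIntegral_sub_le (f g : ℝ → ℝ) (hf : Integrable f) (hg : Integrable g)
    (hfg : ∫ x, f x = ∫ x, g x) {A : Set ℝ} (hA : MeasurableSet A) :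
    |(∫ x in A, f x) - ∫ x in A, g x| ≤ (∫ x, |f x - g x|) / 2 := by
  have hh : Integrable (fun x => f x - g x) := hf.sub hg
  have habs : Integrable (fun x => |f x - g x|) := hh.abs
  have hzero : ∫ x, (f x - g x) = 0 := by
    rw [integral_sub hf hg]; linarith [hfg]
  have key : ∀ {B : Set ℝ}, MeasurableSet B →
      (∫ x in B, (f x - g x)) * 2 ≤ ∫ x, |f x - g x| := by
    intro B hB
    have h1 : ∫ x in B, (f x - g x) ≤ ∫ x in B, |f x - g x| :=
      setIntegral_mono_on hh.integrableOn habs.integrableOn hB (fun x _ => le_abs_self _)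
    have h2 : ∫ x in Bᶜ, (-(f x - g x)) ≤ ∫ x in Bᶜ, |f x - g x| :=
      setIntegral_mono_on hh.neg.integrableOn habs.integrableOn hB.compl
        (fun x _ => neg_le_abs _)
    rw [integral_neg] at h2
    have h3 : (∫ x in B, (f x - g x)) + ∫ x in Bᶜ, (f x - g x) = 0 := by
      rw [integral_add_compl hB hh, hzero]
    have h4 : (∫ x in B, |f x - g x|) + ∫ x in Bᶜ, |f x - g x| = ∫ x, |f x - g x| := by
      rw [integral_add_compl hB habs]
    linarith
  have heq : (∫ x in A, f x) - ∫ x in A, g x = ∫ x in A, (f x - g x) :=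
    (integral_sub hf.integrableOn hg.integrableOn).symm
  have h3 : (∫ x in A, (f x - g x)) + ∫ x in Aᶜ, (f x - g x) = 0 := by
    rw [integral_add_compl hA hh, hzero]
  rw [heq, abs_le]
  constructor
  · linarith [key hA.compl]
  · linarith [key hA]

lemma l1_le_two_sqrt (f g : ℝ → ℝ) (hfm : Measurable f) (hgm : Measurable g)
    (hf0 : ∀ x, 0 ≤ f x) (hg0 : ∀ x, 0 ≤ g x)
    (hf : Integrable f) (hg : Integrable g)
    (hf1 : ∫ x, f x = 1) (hg1 : ∫ x, g x = 1) :
    ∫ x, |f x - g x| ≤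
      2 * Real.sqrt (1 - (∫ x, Real.sqrt (f x) * Real.sqrt (g x)) ^ 2) := by
  set u : ℝ → ℝ := fun x => Real.sqrt (f x) with hu
  set w : ℝ → ℝ := fun x => Real.sqrt (g x) with hw
  have hum : Measurable u := hfm.sqrt
  have hwm : Measurable w := hgm.sqrt
  set B : ℝ := ∫ x, u x * w x with hB
  -- integrability of u * w
  have huw : Integrable (fun x => u x * w x) := by
    refine Integrable.mono' ((hf.add hg).div_const 2) ((hum.mul hwm).aestronglyMeasurable) ?_
    refine Filter.Eventually.of_forall (fun x => ?_)
    rw [Real.norm_of_nonneg (mul_nonneg (Real.sqrt_nonneg _) (Real.sqrt_nonneg _))]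
    simp only [Pi.add_apply]
    nlinarith [sq_nonneg (u x - w x), Real.sq_sqrt (hf0 x), Real.sq_sqrt (hg0 x),
      Real.sqrt_nonneg (f x), Real.sqrt_nonneg (g x)]
  -- integral of (u - w)^2 and (u + w)^2
  have hsub_sq : ∀ x, (u x - w x) ^ 2 = f x + g x - 2 * (u x * w x) := by
    intro x
    have := Real.sq_sqrt (hf0 x); have := Real.sq_sqrt (hg0 x)
    ring_nf
    nlinarith [Real.sq_sqrt (hf0 x), Real.sq_sqrt (hg0 x)]
  have hadd_sq : ∀ x, (u x + w x) ^ 2 = f x + g x + 2 * (u x * w x) := by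
    intro x
    nlinarith [Real.sq_sqrt (hf0 x), Real.sq_sqrt (hg0 x)]
  have hint_sub : Integrable (fun x => (u x - w x) ^ 2) := by
    have : (fun x => (u x - w x) ^ 2)
        = fun x => (f x + g x) - 2 * (u x * w x) := funext (fun x => hsub_sq x)
    rw [this]
    exact (hf.add hg).sub (huw.const_mul 2)
  have hint_add : Integrable (fun x => (u x + w x) ^ 2) := by
    have : (fun x => (u x + w x) ^ 2)
        = fun x => (f x + g x) + 2 * (u x * w x) := funext (fun x => hadd_sq x)
    rw [this]
    exact (hf.add hg).add (huw.const_mul 2)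
  have hfg2 : Integrable (fun x => f x + g x) := hf.add hg
  have huw2 : Integrable (fun x => 2 * (u x * w x)) := huw.const_mul 2
  have hval_sub : ∫ x, (u x - w x) ^ 2 = 2 - 2 * B := by
    simp_rw [hsub_sq]
    rw [integral_sub hfg2 huw2, integral_add hf hg, integral_const_mul, hf1, hg1, ← hB]
    ring
  have hval_add : ∫ x, (u x + w x) ^ 2 = 2 + 2 * B := by
    simp_rw [hadd_sq]
    rw [integral_add hfg2 huw2, integral_add hf hg, integral_const_mul, hf1, hg1, ← hB]
    ring
  have hBle : B ≤ 1 := by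
    have h0 : 0 ≤ ∫ x, (u x - w x) ^ 2 := integral_nonneg (fun x => sq_nonneg _)
    rw [hval_sub] at h0; linarith
  have hB0 : 0 ≤ B := integral_nonneg
    (fun x => mul_nonneg (Real.sqrt_nonneg _) (Real.sqrt_nonneg _))
  -- Memℒp at 2
  have hmemu : MemLp (fun x => |u x - w x|) (ENNReal.ofReal 2) (volume : Measure ℝ) := by
    rw [show ENNReal.ofReal 2 = 2 by norm_num]
    refine (memLp_two_iff_integrable_sq ((hum.sub hwm).abs.aestronglyMeasurable)).2 ?_
    have : (fun x => |u x - w x| ^ 2) = fun x => (u x - w x) ^ 2 := by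
      funext x; rw [sq_abs]
    simp only [Pi.sub_apply]; rw [this]; exact hint_sub
  have hmemw : MemLp (fun x => u x + w x) (ENNReal.ofReal 2) (volume : Measure ℝ) := by
    rw [show ENNReal.ofReal 2 = 2 by norm_num]
    exact (memLp_two_iff_integrable_sq ((hum.add hwm).aestronglyMeasurable)).2 hint_add
  -- Cauchy-Schwarz
  have hpq : Real.HolderConjugate 2 2 := Real.holderConjugate_iff.mpr ⟨one_lt_two, by norm_num⟩
  have hCS := integral_mul_le_Lp_mul_Lq_of_nonneg hpq
    (Filter.Eventually.of_forall (fun x => abs_nonneg (u x - w x)))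
    (Filter.Eventually.of_forall (fun x => add_nonneg (Real.sqrt_nonneg _) (Real.sqrt_nonneg _)))
    hmemu hmemw
  -- rewrite pointwise |f - g| = |u - w| * (u + w)
  have hptw : ∀ x, |f x - g x| = |u x - w x| * (u x + w x) := by
    intro x
    have h1 : f x - g x = (u x - w x) * (u x + w x) := by
      nlinarith [Real.sq_sqrt (hf0 x), Real.sq_sqrt (hg0 x)]
    rw [h1, abs_mul, abs_of_nonneg (add_nonneg (Real.sqrt_nonneg _) (Real.sqrt_nonneg _))]
  have hL : ∫ x, |f x - g x| = ∫ x, |u x - w x| * (u x + w x) := by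
    congr 1; funext x; exact hptw x
  -- rpow sides
  have hr1 : ∫ x, |u x - w x| ^ (2:ℝ) = 2 - 2 * B := by
    rw [← hval_sub]; congr 1; funext x
    rw [show (2:ℝ) = ((2:ℕ):ℝ) by norm_num, Real.rpow_natCast, sq_abs]
  have hr2 : ∫ x, (u x + w x) ^ (2:ℝ) = 2 + 2 * B := by
    rw [← hval_add]; congr 1; funext x
    rw [show (2:ℝ) = ((2:ℕ):ℝ) by norm_num, Real.rpow_natCast]
  rw [hr1, hr2] at hCS
  rw [hL]
  calc ∫ x, |u x - w x| * (u x + w x)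
      ≤ (2 - 2 * B) ^ (1/2 : ℝ) * (2 + 2 * B) ^ (1/2 : ℝ) := hCS
    _ = Real.sqrt (2 - 2 * B) * Real.sqrt (2 + 2 * B) := by
        rw [← Real.sqrt_eq_rpow, ← Real.sqrt_eq_rpow]
    _ = Real.sqrt ((2 - 2 * B) * (2 + 2 * B)) := (Real.sqrt_mul (by linarith) _).symm
    _ = Real.sqrt (4 * (1 - B ^ 2)) := by ring_nf
    _ = 2 * Real.sqrt (1 - B ^ 2) := by
        rw [Real.sqrt_mul (by norm_num : (0:ℝ) ≤ 4),
          show (4:ℝ) = 2 ^ 2 by norm_num, Real.sqrt_sq (by norm_num : (0:ℝ) ≤ 2)]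

lemma sqrt_exp_eq (y : ℝ) : Real.sqrt (rexp y) = rexp (y / 2) := by
  have h2 : rexp (y / 2) * rexp (y / 2) = rexp y := by rw [← Real.exp_add]; ring_nf
  rw [← h2, Real.sqrt_mul_self (Real.exp_nonneg _)]

lemma bhatta (μ₁ μ₂ σ₁ σ₂ : ℝ) (hσ₁ : 0 < σ₁) (hσ₂ : 0 < σ₂) :
    ∫ x, Real.sqrt (gaussianPDFReal μ₁ ⟨σ₁ ^ 2, sq_nonneg σ₁⟩ x) *
        Real.sqrt (gaussianPDFReal μ₂ ⟨σ₂ ^ 2, sq_nonneg σ₂⟩ x) =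
      Real.sqrt (2 * σ₁ * σ₂ / (σ₁ ^ 2 + σ₂ ^ 2)) *
        rexp (-(μ₁ - μ₂) ^ 2 / (4 * (σ₁ ^ 2 + σ₂ ^ 2))) := by
  have hS : (0:ℝ) < σ₁ ^ 2 + σ₂ ^ 2 := by positivity
  set S : ℝ := σ₁ ^ 2 + σ₂ ^ 2 with hSdef
  set k : ℝ := S / (4 * σ₁ ^ 2 * σ₂ ^ 2) with hkdef
  have hk : 0 < k := by positivity
  set m : ℝ := (σ₂ ^ 2 * μ₁ + σ₁ ^ 2 * μ₂) / S with hmdef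
  set d : ℝ := (μ₁ - μ₂) ^ 2 / (4 * S) with hddef
  set c₁ : ℝ := (Real.sqrt (2 * π * σ₁ ^ 2))⁻¹ with hc1def
  set c₂ : ℝ := (Real.sqrt (2 * π * σ₂ ^ 2))⁻¹ with hc2def
  have hc₁0 : 0 ≤ c₁ := by positivity
  have hc₂0 : 0 ≤ c₂ := by positivity
  have hptw : ∀ x : ℝ, Real.sqrt (gaussianPDFReal μ₁ ⟨σ₁ ^ 2, sq_nonneg σ₁⟩ x) *
      Real.sqrt (gaussianPDFReal μ₂ ⟨σ₂ ^ 2, sq_nonneg σ₂⟩ x) =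
      (Real.sqrt (c₁ * c₂) * rexp (-d)) * rexp (-(k * (x - m) ^ 2)) := by
    intro x
    have h1 : gaussianPDFReal μ₁ ⟨σ₁ ^ 2, sq_nonneg σ₁⟩ x
        = c₁ * rexp (-(x - μ₁) ^ 2 / (2 * σ₁ ^ 2)) := by
      simp [gaussianPDFReal, hc1def]; rfl
    have h2 : gaussianPDFReal μ₂ ⟨σ₂ ^ 2, sq_nonneg σ₂⟩ x
        = c₂ * rexp (-(x - μ₂) ^ 2 / (2 * σ₂ ^ 2)) := by
      simp [gaussianPDFReal, hc2def]; rfl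
    rw [h1, h2, Real.sqrt_mul hc₁0, Real.sqrt_mul hc₂0, sqrt_exp_eq, sqrt_exp_eq,
      Real.sqrt_mul hc₁0]
    rw [show Real.sqrt c₁ * rexp (-(x - μ₁) ^ 2 / (2 * σ₁ ^ 2) / 2) *
        (Real.sqrt c₂ * rexp (-(x - μ₂) ^ 2 / (2 * σ₂ ^ 2) / 2))
        = Real.sqrt c₁ * Real.sqrt c₂ *
          (rexp (-(x - μ₁) ^ 2 / (2 * σ₁ ^ 2) / 2) * rexp (-(x - μ₂) ^ 2 / (2 * σ₂ ^ 2) / 2))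
        by ring, ← Real.exp_add]
    have hexp : -(x - μ₁) ^ 2 / (2 * σ₁ ^ 2) / 2 + -(x - μ₂) ^ 2 / (2 * σ₂ ^ 2) / 2
        = -d + -(k * (x - m) ^ 2) := by
      rw [hddef, hkdef, hmdef, hSdef]
      field_simp
      ring
    rw [hexp, Real.exp_add]
    ring
  rw [show (fun x => Real.sqrt (gaussianPDFReal μ₁ ⟨σ₁ ^ 2, sq_nonneg σ₁⟩ x) *
      Real.sqrt (gaussianPDFReal μ₂ ⟨σ₂ ^ 2, sq_nonneg σ₂⟩ x))
      = fun x => (Real.sqrt (c₁ * c₂) * rexp (-d)) * rexp (-(k * (x - m) ^ 2))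
      from funext hptw, integral_const_mul]
  have hgauss : ∫ x : ℝ, rexp (-(k * (x - m) ^ 2)) = Real.sqrt (π / k) := by
    have h1 : (fun x : ℝ => rexp (-(k * (x - m) ^ 2)))
        = fun x : ℝ => (fun y : ℝ => rexp (-k * y ^ 2)) (x - m) := by
      funext x; simp only [neg_mul]
    rw [h1, integral_sub_right_eq_self (fun y : ℝ => rexp (-k * y ^ 2)) m,
      integral_gaussian]
  rw [hgauss]
  -- combine constants
  have h2π : Real.sqrt (2 * π) * Real.sqrt (2 * π) = 2 * π :=
    Real.mul_self_sqrt (by positivity)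
  have hc1 : c₁ = (Real.sqrt (2 * π) * σ₁)⁻¹ := by
    rw [hc1def, Real.sqrt_mul (by positivity : (0:ℝ) ≤ 2 * π), Real.sqrt_sq hσ₁.le]
  have hc2 : c₂ = (Real.sqrt (2 * π) * σ₂)⁻¹ := by
    rw [hc2def, Real.sqrt_mul (by positivity : (0:ℝ) ≤ 2 * π), Real.sqrt_sq hσ₂.le]
  have hval : c₁ * c₂ * (π / k) = 2 * σ₁ * σ₂ / S := by
    rw [hc1, hc2, hkdef]
    have hs2π : (0:ℝ) < Real.sqrt (2 * π) := Real.sqrt_pos.2 (by positivity)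
    have hsep : Real.sqrt 2 * Real.sqrt π * (Real.sqrt 2 * Real.sqrt π) = 2 * π := by
      rw [show Real.sqrt 2 * Real.sqrt π = Real.sqrt (2 * π) from
        (Real.sqrt_mul (by norm_num) π).symm]
      exact Real.mul_self_sqrt (by positivity)
    field_simp
    linear_combination -2 * h2π
  rw [show Real.sqrt (c₁ * c₂) * rexp (-d) * Real.sqrt (π / k)
      = Real.sqrt (c₁ * c₂) * Real.sqrt (π / k) * rexp (-d) by ring,
    ← Real.sqrt_mul (mul_nonneg hc₁0 hc₂0), hval, hddef]
  ring_nf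

/-- Total variation distance `‖P - Q‖_TV = sup_A |P(A) - Q(A)|`. -/
noncomputable def tvDist {α : Type*} [MeasurableSpace α] (P Q : Measure α) : ℝ :=
  ⨆ A : {A : Set α // MeasurableSet A}, |(P A.1).toReal - (Q A.1).toReal|

/-- `‖N(μ₁,σ₁²) - N(μ₂,σ₂²)‖_TV ≤ √((1 - σ₁/σ₂)² + (μ₁-μ₂)²/(2σ₂²))`. -/
theorem tvDist_gaussianReal_le (μ₁ μ₂ σ₁ σ₂ : ℝ) (hσ₁ : 0 < σ₁) (hσ₂ : 0 < σ₂) :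
    tvDist (gaussianReal μ₁ ⟨σ₁ ^ 2, sq_nonneg σ₁⟩)
        (gaussianReal μ₂ ⟨σ₂ ^ 2, sq_nonneg σ₂⟩) ≤
      Real.sqrt ((1 - σ₁ / σ₂) ^ 2 + (μ₁ - μ₂) ^ 2 / (2 * σ₂ ^ 2)) := by
  have hv₁ : (⟨σ₁ ^ 2, sq_nonneg σ₁⟩ : ℝ≥0) ≠ 0 := by
    intro h
    have : ((⟨σ₁ ^ 2, sq_nonneg σ₁⟩ : ℝ≥0) : ℝ) = 0 := by rw [h]; simp
    exact (pow_ne_zero 2 hσ₁.ne') this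
  have hv₂ : (⟨σ₂ ^ 2, sq_nonneg σ₂⟩ : ℝ≥0) ≠ 0 := by
    intro h
    have : ((⟨σ₂ ^ 2, sq_nonneg σ₂⟩ : ℝ≥0) : ℝ) = 0 := by rw [h]; simp
    exact (pow_ne_zero 2 hσ₂.ne') this
  set f : ℝ → ℝ := gaussianPDFReal μ₁ ⟨σ₁ ^ 2, sq_nonneg σ₁⟩ with hfdef
  set g : ℝ → ℝ := gaussianPDFReal μ₂ ⟨σ₂ ^ 2, sq_nonneg σ₂⟩ with hgdef
  have hfm : Measurable f := measurable_gaussianPDFReal _ _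
  have hgm : Measurable g := measurable_gaussianPDFReal _ _
  have hf0 : ∀ x, 0 ≤ f x := gaussianPDFReal_nonneg _ _
  have hg0 : ∀ x, 0 ≤ g x := gaussianPDFReal_nonneg _ _
  have hfi : Integrable f := integrable_gaussianPDFReal _ _
  have hgi : Integrable g := integrable_gaussianPDFReal _ _
  have hf1 : ∫ x, f x = 1 := integral_gaussianPDFReal_eq_one μ₁ hv₁
  have hg1 : ∫ x, g x = 1 := integral_gaussianPDFReal_eq_one μ₂ hv₂
  set S : ℝ := σ₁ ^ 2 + σ₂ ^ 2 with hSdef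
  have hS : (0:ℝ) < S := by positivity
  set B : ℝ := ∫ x, Real.sqrt (f x) * Real.sqrt (g x) with hBdef
  have hBval : B = Real.sqrt (2 * σ₁ * σ₂ / S) * rexp (-(μ₁ - μ₂) ^ 2 / (4 * S)) :=
    bhatta μ₁ μ₂ σ₁ σ₂ hσ₁ hσ₂
  have hB2 : B ^ 2 = (2 * σ₁ * σ₂ / S) * rexp (-((μ₁ - μ₂) ^ 2 / (2 * S))) := by
    rw [hBval, mul_pow, Real.sq_sqrt (by positivity), sq, ← Real.exp_add]
    congr 1
    field_simp
    ring
  -- final algebraic inequality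
  have halg : 1 - B ^ 2 ≤ (1 - σ₁ / σ₂) ^ 2 + (μ₁ - μ₂) ^ 2 / (2 * σ₂ ^ 2) := by
    rw [hB2]
    set u : ℝ := 2 * σ₁ * σ₂ / S with hudef
    set y : ℝ := (μ₁ - μ₂) ^ 2 / (2 * S) with hydef
    have hy0 : 0 ≤ y := by positivity
    have hu0 : 0 ≤ u := by positivity
    have hu1 : u ≤ 1 := by
      rw [hudef, div_le_one hS]
      nlinarith [sq_nonneg (σ₁ - σ₂)]
    have hexp : 1 - y ≤ rexp (-y) := by
      have := Real.add_one_le_exp (-y); linarith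
    have h1 : u * (1 - y) ≤ u * rexp (-y) := mul_le_mul_of_nonneg_left hexp hu0
    have h2 : (1 - σ₁ / σ₂) ^ 2 = (σ₁ - σ₂) ^ 2 / σ₂ ^ 2 := by
      field_simp; ring
    have h3 : 1 - u = (σ₁ - σ₂) ^ 2 / S := by
      rw [hudef]; field_simp; ring
    have h4 : (σ₁ - σ₂) ^ 2 / S ≤ (σ₁ - σ₂) ^ 2 / σ₂ ^ 2 :=
      div_le_div_of_nonneg_left (sq_nonneg _) (by positivity)
        (by rw [hSdef]; nlinarith [sq_nonneg σ₁])
    have h5 : u * y ≤ y := by nlinarith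
    have h6 : y ≤ (μ₁ - μ₂) ^ 2 / (2 * σ₂ ^ 2) := by
      rw [hydef]
      exact div_le_div_of_nonneg_left (sq_nonneg _) (by positivity)
        (by rw [hSdef]; nlinarith [sq_nonneg σ₁])
    linarith
  -- the sup
  haveI : Nonempty {A : Set ℝ // MeasurableSet A} := ⟨⟨∅, MeasurableSet.empty⟩⟩
  refine ciSup_le ?_
  rintro ⟨A, hA⟩
  have hPA : ((gaussianReal μ₁ ⟨σ₁ ^ 2, sq_nonneg σ₁⟩) A).toReal = ∫ x in A, f x := by
    rw [gaussianReal_apply_eq_integral μ₁ hv₁ A,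
      ENNReal.toReal_ofReal (setIntegral_nonneg hA (fun x _ => hf0 x))]
  have hQA : ((gaussianReal μ₂ ⟨σ₂ ^ 2, sq_nonneg σ₂⟩) A).toReal = ∫ x in A, g x := by
    rw [gaussianReal_apply_eq_integral μ₂ hv₂ A,
      ENNReal.toReal_ofReal (setIntegral_nonneg hA (fun x _ => hg0 x))]
  simp only [hPA, hQA]
  calc |(∫ x in A, f x) - ∫ x in A, g x| ≤ (∫ x, |f x - g x|) / 2 :=
        abs_setIntegral_sub_le f g hfi hgi (by rw [hf1, hg1]) hA
    _ ≤ (2 * Real.sqrt (1 - B ^ 2)) / 2 := by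
        have := l1_le_two_sqrt f g hfm hgm hf0 hg0 hfi hgi hf1 hg1
        rw [← hBdef] at this
        linarith
    _ = Real.sqrt (1 - B ^ 2) := by ring
    _ ≤ Real.sqrt ((1 - σ₁ / σ₂) ^ 2 + (μ₁ - μ₂) ^ 2 / (2 * σ₂ ^ 2)) :=
        Real.sqrt_le_sqrt halg
end

section
/- Let N be a random variable on ℝ, (Y_j) i.i.d. real random variables independent of N, P a Poisson random variable with parameter λ > 0 independent of everything, and ε a Bernoulli random variable with parameter α = λe^{-λ} independent of N and Y₁. Let Q₁ be the law of N + Σ_{j=1}^P Y_j and Q₂ the law of N + εY₁. Then ‖Q₁ - Q₂‖_TV ≤ 2λ². -/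
open MeasureTheory

/-- `k`-fold convolution power of a measure on `ℝ` (law of the sum of `k` i.i.d. copies). -/
noncomputable def convPow (ν : Measure ℝ) : ℕ → Measure ℝ
  | 0 => Measure.dirac 0
  | k + 1 => (convPow ν k).conv ν

set_option maxHeartbeats 1000000

private instance convPow_prob (ν : Measure ℝ) [IsProbabilityMeasure ν] (k : ℕ) :
    IsProbabilityMeasure (convPow ν k) := by
  induction k with
  | zero => exact Measure.dirac.isProbabilityMeasure
  | succ k ih =>
    haveI := ih
    show IsProbabilityMeasure ((convPow ν k).conv ν)
    infer_instance

private theorem tv_aux (νN νY : Measure ℝ)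
    [IsProbabilityMeasure νN] [IsProbabilityMeasure νY] (l : ℝ) (hl : 0 < l) :
    (⨆ A : {A : Set ℝ // MeasurableSet A},
      |((Measure.sum fun k : ℕ =>
        (ENNReal.ofReal (Real.exp (-l) * l ^ k / (Nat.factorial k))) •
          (νN.conv (convPow νY k))) A.1).toReal -
       (((ENNReal.ofReal (1 - l * Real.exp (-l)) • νN +
        ENNReal.ofReal (l * Real.exp (-l)) • (νN.conv νY))) A.1).toReal|) ≤ 2 * l ^ 2 := by
  haveI : Nonempty {A : Set ℝ // MeasurableSet A} := ⟨⟨∅, MeasurableSet.empty⟩⟩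
  set p : ℕ → ℝ := fun k => Real.exp (-l) * (l ^ k / (Nat.factorial k)) with hp_def
  have hexp : 0 < Real.exp (-l) := Real.exp_pos _
  have hp_nonneg : ∀ k, 0 ≤ p k := fun k =>
    mul_nonneg hexp.le (div_nonneg (pow_nonneg hl.le _) (Nat.cast_nonneg _))
  have hp_summable : Summable p := (Real.summable_pow_div_factorial l).mul_left _
  have hp_sum : ∑' k, p k = 1 := by
    rw [tsum_mul_left]
    have : ∑' k : ℕ, l ^ k / (Nat.factorial k) = Real.exp l := by
      rw [Real.exp_eq_exp_ℝ, NormedSpace.exp_eq_tsum_div]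
    rw [this, ← Real.exp_add]
    simp
  -- α ≤ 1
  have hα_nonneg : 0 ≤ l * Real.exp (-l) := mul_nonneg hl.le hexp.le
  have hα_le : l * Real.exp (-l) ≤ 1 := by
    have h1 : l + 1 ≤ Real.exp l := Real.add_one_le_exp l
    have h2 : Real.exp (-l) * Real.exp l = 1 := by rw [← Real.exp_add]; simp
    nlinarith
  apply ciSup_le
  rintro ⟨A, hA⟩
  set μ : ℕ → Measure ℝ := fun k => νN.conv (convPow νY k) with hμ_def
  haveI : ∀ k, IsProbabilityMeasure (μ k) := fun k => by
    rw [hμ_def]; infer_instance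
  set m : ℕ → ℝ := fun k => ((μ k) A).toReal with hm_def
  have hm_nonneg : ∀ k, 0 ≤ m k := fun k => ENNReal.toReal_nonneg
  have hm_le : ∀ k, m k ≤ 1 := fun k => by
    have h1 : (μ k) A ≤ 1 := prob_le_one
    simpa using ENNReal.toReal_mono ENNReal.one_ne_top h1
  -- Q₁ value
  have hcoef : ∀ k : ℕ, Real.exp (-l) * l ^ k / (Nat.factorial k) = p k := fun k =>
    (mul_div_assoc _ _ _)
  have hQ1 : ((Measure.sum fun k : ℕ =>
        (ENNReal.ofReal (Real.exp (-l) * l ^ k / (Nat.factorial k))) • μ k) A).toReal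
      = ∑' k, p k * m k := by
    rw [Measure.sum_apply _ hA]
    rw [ENNReal.tsum_toReal_eq (fun k => by
      simp only [Measure.smul_apply, smul_eq_mul]
      exact ENNReal.mul_ne_top ENNReal.ofReal_ne_top (measure_ne_top _ _))]
    congr 1
    funext k
    rw [Measure.smul_apply, smul_eq_mul, hcoef k, ENNReal.toReal_mul,
      ENNReal.toReal_ofReal (hp_nonneg k)]
  have hg_summable : Summable (fun k => p k * m k) := by
    apply Summable.of_nonneg_of_le (fun k => mul_nonneg (hp_nonneg k) (hm_nonneg k))
      (fun k => ?_) hp_summable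
    calc p k * m k ≤ p k * 1 := by
          exact mul_le_mul_of_nonneg_left (hm_le k) (hp_nonneg k)
    _ = p k := mul_one _
  -- identify μ 0 and μ 1
  have hμ0 : μ 0 = νN := by
    show νN.conv (Measure.dirac 0) = νN
    simp
  have hμ1 : μ 1 = νN.conv νY := by
    show νN.conv ((convPow νY 0).conv νY) = νN.conv νY
    congr 1
    show (Measure.dirac 0).conv νY = νY
    simp
  -- Q₂ value
  have hQ2 : (((ENNReal.ofReal (1 - l * Real.exp (-l)) • νN +
        ENNReal.ofReal (l * Real.exp (-l)) • (νN.conv νY))) A).toReal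
      = (1 - l * Real.exp (-l)) * m 0 + (l * Real.exp (-l)) * m 1 := by
    rw [Measure.add_apply]
    simp only [Measure.smul_apply, smul_eq_mul]
    rw [ENNReal.toReal_add (ENNReal.mul_ne_top ENNReal.ofReal_ne_top (measure_ne_top _ _))
        (ENNReal.mul_ne_top ENNReal.ofReal_ne_top (measure_ne_top _ _)),
      ENNReal.toReal_mul, ENNReal.toReal_mul,
      ENNReal.toReal_ofReal (by linarith), ENNReal.toReal_ofReal hα_nonneg]
    rw [hm_def]
    simp only [hμ0, hμ1]
  rw [hQ1, hQ2]
  -- split sums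
  set T : ℝ := ∑' k, p (k + 2) with hT_def
  set R : ℝ := ∑' k, p (k + 2) * m (k + 2) with hR_def
  have hp_tail : Summable (fun k => p (k + 2)) := (summable_nat_add_iff 2).mpr hp_summable
  have hg_tail : Summable (fun k => p (k + 2) * m (k + 2)) :=
    (summable_nat_add_iff 2).mpr hg_summable
  have hsplit_p : p 0 + p 1 + T = 1 := by
    have := Summable.sum_add_tsum_nat_add 2 hp_summable
    rw [hp_sum] at this
    simp [Finset.sum_range_succ] at this
    linarith [this]
  have hsplit_g : ∑' k, p k * m k = p 0 * m 0 + p 1 * m 1 + R := by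
    have := Summable.sum_add_tsum_nat_add 2 hg_summable
    simp [Finset.sum_range_succ] at this
    linarith [this]
  have hT_nonneg : 0 ≤ T := tsum_nonneg (fun k => hp_nonneg _)
  have hR_nonneg : 0 ≤ R := tsum_nonneg (fun k => mul_nonneg (hp_nonneg _) (hm_nonneg _))
  have hRT : R ≤ T := by
    apply Summable.tsum_le_tsum _ hg_tail hp_tail
    intro k
    calc p (k + 2) * m (k + 2) ≤ p (k + 2) * 1 :=
          mul_le_mul_of_nonneg_left (hm_le _) (hp_nonneg _)
    _ = p (k + 2) := mul_one _
  have hT_le : T ≤ l ^ 2 := by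
    have hterm : ∀ k : ℕ, p (k + 2) ≤ l ^ 2 * p k := by
      intro k
      have hfac : (Nat.factorial k : ℝ) ≤ (Nat.factorial (k + 2) : ℝ) := by
        exact_mod_cast Nat.factorial_le (by omega)
      have hfacpos : (0:ℝ) < Nat.factorial k := by
        exact_mod_cast Nat.factorial_pos k
      have h1 : l ^ (k + 2) / (Nat.factorial (k + 2)) ≤ l ^ (k + 2) / (Nat.factorial k) :=
        div_le_div_of_nonneg_left (pow_nonneg hl.le _) hfacpos hfac
      have h2 : l ^ (k + 2) / (Nat.factorial k) = l ^ 2 * (l ^ k / (Nat.factorial k)) := by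
        rw [pow_add]; ring
      calc p (k + 2) = Real.exp (-l) * (l ^ (k + 2) / (Nat.factorial (k + 2))) := rfl
      _ ≤ Real.exp (-l) * (l ^ (k + 2) / (Nat.factorial k)) :=
          mul_le_mul_of_nonneg_left h1 hexp.le
      _ = l ^ 2 * p k := by rw [h2, hp_def]; ring
    calc T ≤ ∑' k, l ^ 2 * p k := Summable.tsum_le_tsum hterm hp_tail (hp_summable.mul_left _)
    _ = l ^ 2 * ∑' k, p k := tsum_mul_left
    _ = l ^ 2 := by rw [hp_sum]; ring
  have hp1 : p 1 = l * Real.exp (-l) := by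
    simp [hp_def]
    ring
  rw [hsplit_g]
  have hTm : T * m 0 ≤ T := mul_le_of_le_one_right hT_nonneg (hm_le 0)
  have hTm0 : 0 ≤ T * m 0 := mul_nonneg hT_nonneg (hm_nonneg 0)
  have hkey : p 0 * m 0 + p 1 * m 1 + R -
      ((1 - l * Real.exp (-l)) * m 0 + l * Real.exp (-l) * m 1) = R - T * m 0 := by
    rw [hp1] at hsplit_p ⊢
    have : 1 - l * Real.exp (-l) = p 0 + T := by linarith
    rw [this]; ring
  rw [hkey]
  rw [abs_le]
  constructor <;> nlinarith

/-- Let `N` have law `νN`, `(Y_j)` i.i.d. with law `νY` independent of `N`, `P` Poisson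
with parameter `λ > 0` independent of everything, `ε` Bernoulli with parameter
`α = λe^{-λ}` independent of `N` and `Y₁`.  The law `Q₁` of `N + Σ_{j=1}^P Y_j` is the
Poisson mixture of convolution powers, and the law `Q₂` of `N + εY₁` is the Bernoulli
mixture; then `‖Q₁ - Q₂‖_TV ≤ 2λ²`. -/
theorem tvDist_compoundPoisson_bernoulli (νN νY : Measure ℝ)
    [IsProbabilityMeasure νN] [IsProbabilityMeasure νY] (l : ℝ) (hl : 0 < l) :
    tvDist
      (Measure.sum fun k : ℕ =>
        (ENNReal.ofReal (Real.exp (-l) * l ^ k / (Nat.factorial k))) •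
          (νN.conv (convPow νY k)))
      (ENNReal.ofReal (1 - l * Real.exp (-l)) • νN +
        ENNReal.ofReal (l * Real.exp (-l)) • (νN.conv νY)) ≤ 2 * l ^ 2 :=
  tv_aux νN νY l hl
end

section
/- For i = 1,…,n, let N_i ~ N(m_i, σ_i²), P_i Poisson with parameter λ_i > 0, (Y_j) i.i.d. independent of everything, and ε_i Bernoulli with parameter α_i = λ_i e^{-λ_i}, mutually independent across i. Denote by Q_{N_i}*Q_{(Y,P_i)} the law of N_i + Σ_{j=1}^{P_i} Y_j and Q_{N_i}*Q_{(Y₁,ε_i)} the law of N_i + ε_i Y₁. Then ‖⊗_{i=1}^n (Q_{N_i}*Q_{(Y,P_i)}) - ⊗_{i=1}^n (Q_{N_i}*Q_{(Y₁,ε_i)})‖_TV ≤ 2√(Σ_{i=1}^n λ_i²). -/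
open MeasureTheory

instance convPow_isProb (ν : Measure ℝ) [IsProbabilityMeasure ν] (k : ℕ) :
    IsProbabilityMeasure (convPow ν k) := by
  induction k with
  | zero => exact Measure.dirac.isProbabilityMeasure
  | succ k ih => exact MeasureTheory.Measure.probabilitymeasure_of_probabilitymeasures_conv _ _

section TV
variable {α β : Type*} [MeasurableSpace α] [MeasurableSpace β]

instance : Nonempty {A : Set α // MeasurableSet A} := ⟨⟨∅, MeasurableSet.empty⟩⟩

lemma tvDist_le {P Q : Measure α} {c : ℝ}
    (h : ∀ A : Set α, MeasurableSet A → |(P A).toReal - (Q A).toReal| ≤ c) :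
    tvDist P Q ≤ c :=
  ciSup_le fun A => h A.1 A.2

lemma tv_bdd (P Q : Measure α) [IsProbabilityMeasure P] [IsProbabilityMeasure Q] :
    BddAbove (Set.range fun A : {A : Set α // MeasurableSet A} =>
      |(P A.1).toReal - (Q A.1).toReal|) := by
  refine ⟨1, ?_⟩
  rintro x ⟨A, rfl⟩
  have h1 : (P A.1).toReal ≤ 1 := by
    simpa using ENNReal.toReal_mono (by simp) (prob_le_one (μ := P) (s := A.1))
  have h2 : (Q A.1).toReal ≤ 1 := by
    simpa using ENNReal.toReal_mono (by simp) (prob_le_one (μ := Q) (s := A.1))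
  have h3 : 0 ≤ (P A.1).toReal := ENNReal.toReal_nonneg
  have h4 : 0 ≤ (Q A.1).toReal := ENNReal.toReal_nonneg
  rw [abs_le]; constructor <;> linarith

lemma abs_le_tvDist {P Q : Measure α} [IsProbabilityMeasure P] [IsProbabilityMeasure Q]
    {A : Set α} (hA : MeasurableSet A) :
    |(P A).toReal - (Q A).toReal| ≤ tvDist P Q :=
  le_ciSup (tv_bdd P Q) ⟨A, hA⟩

lemma tvDist_nonneg (P Q : Measure α) [IsProbabilityMeasure P] [IsProbabilityMeasure Q] :
    0 ≤ tvDist P Q :=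
  le_trans (by simp) (abs_le_tvDist (P := P) (Q := Q) MeasurableSet.empty)

lemma tvDist_le_one (P Q : Measure α) [IsProbabilityMeasure P] [IsProbabilityMeasure Q] :
    tvDist P Q ≤ 1 := by
  refine tvDist_le fun A hA => ?_
  have h1 : (P A).toReal ≤ 1 := by
    simpa using ENNReal.toReal_mono (by simp) (prob_le_one (μ := P) (s := A))
  have h2 : (Q A).toReal ≤ 1 := by
    simpa using ENNReal.toReal_mono (by simp) (prob_le_one (μ := Q) (s := A))
  have h3 : 0 ≤ (P A).toReal := ENNReal.toReal_nonneg
  have h4 : 0 ≤ (Q A).toReal := ENNReal.toReal_nonneg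
  rw [abs_le]; constructor <;> linarith

lemma tvDist_triangle (P Q R : Measure α) [IsProbabilityMeasure P] [IsProbabilityMeasure Q]
    [IsProbabilityMeasure R] : tvDist P R ≤ tvDist P Q + tvDist Q R := by
  refine tvDist_le fun A hA => ?_
  calc |(P A).toReal - (R A).toReal|
      ≤ |(P A).toReal - (Q A).toReal| + |(Q A).toReal - (R A).toReal| := abs_sub_le _ _ _
    _ ≤ tvDist P Q + tvDist Q R := add_le_add (abs_le_tvDist hA) (abs_le_tvDist hA)

lemma tvDist_map_le {f : α → β} (hf : Measurable f) (P Q : Measure α)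
    [IsProbabilityMeasure P] [IsProbabilityMeasure Q] :
    tvDist (P.map f) (Q.map f) ≤ tvDist P Q := by
  refine tvDist_le fun A hA => ?_
  rw [Measure.map_apply hf hA, Measure.map_apply hf hA]
  exact abs_le_tvDist (hf hA)

lemma tvDist_prod_right (μ : Measure α) (ν₁ ν₂ : Measure β) [IsProbabilityMeasure μ]
    [IsProbabilityMeasure ν₁] [IsProbabilityMeasure ν₂] :
    tvDist (μ.prod ν₁) (μ.prod ν₂) ≤ tvDist ν₁ ν₂ := by
  refine tvDist_le fun A hA => ?_
  set f : α → ℝ := fun x => (ν₁ (Prod.mk x ⁻¹' A)).toReal with hf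
  set g : α → ℝ := fun x => (ν₂ (Prod.mk x ⁻¹' A)).toReal with hg
  have hfm : Measurable f := (measurable_measure_prodMk_left hA).ennreal_toReal
  have hgm : Measurable g := (measurable_measure_prodMk_left hA).ennreal_toReal
  have hfb : ∀ x, ‖f x‖ ≤ 1 := by
    intro x
    simp only [hf, Real.norm_eq_abs, abs_of_nonneg ENNReal.toReal_nonneg]
    simpa using ENNReal.toReal_mono (by simp) (prob_le_one (μ := ν₁))
  have hgb : ∀ x, ‖g x‖ ≤ 1 := by
    intro x
    simp only [hg, Real.norm_eq_abs, abs_of_nonneg ENNReal.toReal_nonneg]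
    simpa using ENNReal.toReal_mono (by simp) (prob_le_one (μ := ν₂))
  have hfi : Integrable f μ :=
    Integrable.mono' (integrable_const 1) hfm.aestronglyMeasurable (ae_of_all _ hfb)
  have hgi : Integrable g μ :=
    Integrable.mono' (integrable_const 1) hgm.aestronglyMeasurable (ae_of_all _ hgb)
  have h1 : ((μ.prod ν₁) A).toReal = ∫ x, f x ∂μ := by
    rw [Measure.prod_apply hA]
    exact (integral_toReal (measurable_measure_prodMk_left hA).aemeasurable
      (ae_of_all _ fun x => lt_of_le_of_lt (prob_le_one) ENNReal.one_lt_top)).symm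
  have h2 : ((μ.prod ν₂) A).toReal = ∫ x, g x ∂μ := by
    rw [Measure.prod_apply hA]
    exact (integral_toReal (measurable_measure_prodMk_left hA).aemeasurable
      (ae_of_all _ fun x => lt_of_le_of_lt (prob_le_one) ENNReal.one_lt_top)).symm
  rw [h1, h2, ← integral_sub hfi hgi]
  calc |∫ x, (f x - g x) ∂μ| ≤ ∫ x, |f x - g x| ∂μ := by
        simpa using norm_integral_le_integral_norm (fun x => f x - g x) (μ := μ)
    _ ≤ ∫ _, tvDist ν₁ ν₂ ∂μ := by
        refine integral_mono ((hfi.sub hgi).abs) (integrable_const _) fun x => ?_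
        exact abs_le_tvDist (hA.preimage measurable_prodMk_left)
    _ = tvDist ν₁ ν₂ := by simp

lemma tvDist_prod_left (μ₁ μ₂ : Measure α) (ν : Measure β) [IsProbabilityMeasure μ₁]
    [IsProbabilityMeasure μ₂] [IsProbabilityMeasure ν] :
    tvDist (μ₁.prod ν) (μ₂.prod ν) ≤ tvDist μ₁ μ₂ := by
  refine tvDist_le fun A hA => ?_
  set f : β → ℝ := fun y => (μ₁ ((fun x => (x, y)) ⁻¹' A)).toReal with hf
  set g : β → ℝ := fun y => (μ₂ ((fun x => (x, y)) ⁻¹' A)).toReal with hg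
  have hfm : Measurable f := (measurable_measure_prodMk_right hA).ennreal_toReal
  have hgm : Measurable g := (measurable_measure_prodMk_right hA).ennreal_toReal
  have hfb : ∀ x, ‖f x‖ ≤ 1 := by
    intro x
    simp only [hf, Real.norm_eq_abs, abs_of_nonneg ENNReal.toReal_nonneg]
    simpa using ENNReal.toReal_mono (by simp) (prob_le_one (μ := μ₁))
  have hgb : ∀ x, ‖g x‖ ≤ 1 := by
    intro x
    simp only [hg, Real.norm_eq_abs, abs_of_nonneg ENNReal.toReal_nonneg]
    simpa using ENNReal.toReal_mono (by simp) (prob_le_one (μ := μ₂))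
  have hfi : Integrable f ν :=
    Integrable.mono' (integrable_const 1) hfm.aestronglyMeasurable (ae_of_all _ hfb)
  have hgi : Integrable g ν :=
    Integrable.mono' (integrable_const 1) hgm.aestronglyMeasurable (ae_of_all _ hgb)
  have h1 : ((μ₁.prod ν) A).toReal = ∫ y, f y ∂ν := by
    rw [Measure.prod_apply_symm hA]
    exact (integral_toReal (measurable_measure_prodMk_right hA).aemeasurable
      (ae_of_all _ fun x => lt_of_le_of_lt (prob_le_one) ENNReal.one_lt_top)).symm
  have h2 : ((μ₂.prod ν) A).toReal = ∫ y, g y ∂ν := by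
    rw [Measure.prod_apply_symm hA]
    exact (integral_toReal (measurable_measure_prodMk_right hA).aemeasurable
      (ae_of_all _ fun x => lt_of_le_of_lt (prob_le_one) ENNReal.one_lt_top)).symm
  rw [h1, h2, ← integral_sub hfi hgi]
  calc |∫ y, (f y - g y) ∂ν| ≤ ∫ y, |f y - g y| ∂ν := by
        simpa using norm_integral_le_integral_norm (fun y => f y - g y) (μ := ν)
    _ ≤ ∫ _, tvDist μ₁ μ₂ ∂ν := by
        refine integral_mono ((hfi.sub hgi).abs) (integrable_const _) fun y => ?_
        exact abs_le_tvDist (hA.preimage measurable_prodMk_right)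
    _ = tvDist μ₁ μ₂ := by simp

lemma tvDist_prod_prod (μ₁ μ₂ : Measure α) (ν₁ ν₂ : Measure β) [IsProbabilityMeasure μ₁]
    [IsProbabilityMeasure μ₂] [IsProbabilityMeasure ν₁] [IsProbabilityMeasure ν₂] :
    tvDist (μ₁.prod ν₁) (μ₂.prod ν₂) ≤ tvDist μ₁ μ₂ + tvDist ν₁ ν₂ := by
  calc tvDist (μ₁.prod ν₁) (μ₂.prod ν₂)
      ≤ tvDist (μ₁.prod ν₁) (μ₁.prod ν₂) + tvDist (μ₁.prod ν₂) (μ₂.prod ν₂) :=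
        tvDist_triangle _ _ _
    _ ≤ tvDist ν₁ ν₂ + tvDist μ₁ μ₂ :=
        add_le_add (tvDist_prod_right _ _ _) (tvDist_prod_left _ _ _)
    _ = tvDist μ₁ μ₂ + tvDist ν₁ ν₂ := add_comm _ _


lemma tvDist_self {α : Type*} [MeasurableSpace α] (P : Measure α) : tvDist P P = 0 := by
  have : ∀ A : {A : Set α // MeasurableSet A}, |(P A.1).toReal - (P A.1).toReal| = 0 := by
    simp
  simp only [tvDist, this, ciSup_const]

lemma tvDist_pi_le : ∀ {n : ℕ} {α : Fin n → Type} [∀ i, MeasurableSpace (α i)]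
    (P Q : ∀ i, Measure (α i)) [∀ i, IsProbabilityMeasure (P i)]
    [∀ i, IsProbabilityMeasure (Q i)],
    tvDist (Measure.pi P) (Measure.pi Q) ≤ ∑ i, tvDist (P i) (Q i) := by
  intro n
  induction n with
  | zero =>
    intro α _ P Q _ _
    rw [Measure.pi_of_empty P, Measure.pi_of_empty Q]
    simp [tvDist_self]
  | succ n ih =>
    intro α _ P Q _ _
    set e := MeasurableEquiv.piFinSuccAbove α 0
    have hP := (measurePreserving_piFinSuccAbove P 0).map_eq
    have hQ := (measurePreserving_piFinSuccAbove Q 0).map_eq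
    have hP' : Measure.pi P = Measure.map e.symm
        ((P 0).prod (Measure.pi fun j => P (Fin.succAbove 0 j))) := by
      rw [← hP, MeasurableEquiv.map_symm_map]
    have hQ' : Measure.pi Q = Measure.map e.symm
        ((Q 0).prod (Measure.pi fun j => Q (Fin.succAbove 0 j))) := by
      rw [← hQ, MeasurableEquiv.map_symm_map]
    rw [hP', hQ']
    calc tvDist (Measure.map e.symm ((P 0).prod (Measure.pi fun j => P (Fin.succAbove 0 j))))
          (Measure.map e.symm ((Q 0).prod (Measure.pi fun j => Q (Fin.succAbove 0 j))))
        ≤ tvDist ((P 0).prod (Measure.pi fun j => P (Fin.succAbove 0 j)))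
            ((Q 0).prod (Measure.pi fun j => Q (Fin.succAbove 0 j))) :=
          tvDist_map_le e.symm.measurable _ _
      _ ≤ tvDist (P 0) (Q 0) + tvDist (Measure.pi fun j => P (Fin.succAbove 0 j))
            (Measure.pi fun j => Q (Fin.succAbove 0 j)) := tvDist_prod_prod _ _ _ _
      _ ≤ tvDist (P 0) (Q 0) +
            ∑ j, tvDist (P (Fin.succAbove 0 j)) (Q (Fin.succAbove 0 j)) := by
          exact add_le_add (le_refl _) (ih (fun j => P (Fin.succAbove 0 j)) (fun j => Q (Fin.succAbove 0 j)))
      _ = ∑ i, tvDist (P i) (Q i) := by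
          rw [Fin.sum_univ_succ]
          simp [Fin.succAbove_zero]
          rfl


lemma poissonMix_isProb (μk : ℕ → Measure ℝ) [∀ k, IsProbabilityMeasure (μk k)] {L : ℝ}
    (hL : 0 < L) :
    IsProbabilityMeasure (Measure.sum fun k : ℕ =>
      (ENNReal.ofReal (Real.exp (-L) * L ^ k / (Nat.factorial k))) • μk k) := by
  constructor
  rw [Measure.sum_apply _ MeasurableSet.univ]
  have hp0 : ∀ k : ℕ, 0 ≤ Real.exp (-L) * L ^ k / (Nat.factorial k) := fun k => by
    have : (0:ℝ) ≤ L ^ k := le_of_lt (pow_pos hL k)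
    positivity
  have hpsum : Summable fun k : ℕ => Real.exp (-L) * L ^ k / (Nat.factorial k) := by
    simp_rw [mul_div_assoc]
    exact (Real.summable_pow_div_factorial L).mul_left _
  have hptot : ∑' k : ℕ, Real.exp (-L) * L ^ k / (Nat.factorial k) = 1 := by
    simp_rw [mul_div_assoc]
    rw [tsum_mul_left]
    have : ∑' k : ℕ, L ^ k / (Nat.factorial k : ℝ) = Real.exp L := by
      rw [Real.exp_eq_exp_ℝ, NormedSpace.exp_eq_tsum_div]
    rw [this, ← Real.exp_add]
    simp
  calc ∑' k : ℕ, ((ENNReal.ofReal (Real.exp (-L) * L ^ k / (Nat.factorial k))) • μk k) Set.univ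
      = ∑' k : ℕ, ENNReal.ofReal (Real.exp (-L) * L ^ k / (Nat.factorial k)) := by
        congr 1; funext k
        rw [Measure.smul_apply, smul_eq_mul, measure_univ, mul_one]
    _ = ENNReal.ofReal (∑' k : ℕ, Real.exp (-L) * L ^ k / (Nat.factorial k)) :=
        (ENNReal.ofReal_tsum_of_nonneg hp0 hpsum).symm
    _ = 1 := by rw [hptot]; simp

lemma bernoulliMix_isProb (μ ν : Measure ℝ) [IsProbabilityMeasure μ] [IsProbabilityMeasure ν]
    {a : ℝ} (ha0 : 0 ≤ a) (ha1 : a ≤ 1) :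
    IsProbabilityMeasure (ENNReal.ofReal (1 - a) • μ + ENNReal.ofReal a • ν) := by
  constructor
  rw [Measure.add_apply, Measure.smul_apply, Measure.smul_apply, smul_eq_mul, smul_eq_mul,
    measure_univ, measure_univ, mul_one, mul_one, ← ENNReal.ofReal_add (by linarith) ha0]
  norm_num

lemma tvDist_coord (μG νY : Measure ℝ) [IsProbabilityMeasure μG] [IsProbabilityMeasure νY]
    {L : ℝ} (hL : 0 < L) :
    tvDist
      (Measure.sum fun k : ℕ => (ENNReal.ofReal (Real.exp (-L) * L ^ k / (Nat.factorial k))) •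
        (μG.conv (convPow νY k)))
      (ENNReal.ofReal (1 - L * Real.exp (-L)) • μG +
        ENNReal.ofReal (L * Real.exp (-L)) • (μG.conv νY)) ≤ L ^ 2 := by
  have hE : 0 < Real.exp (-L) := Real.exp_pos _
  have h1L : 1 + L ≤ Real.exp L := by have := Real.add_one_le_exp L; linarith
  have hEl : 1 - L ≤ Real.exp (-L) := by have := Real.add_one_le_exp (-L); linarith
  have hEmul : Real.exp (-L) * Real.exp L = 1 := by rw [← Real.exp_add]; simp
  have key1 : 0 ≤ 1 - (1 + L) * Real.exp (-L) := by nlinarith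
  have key2 : 1 - (1 + L) * Real.exp (-L) ≤ L ^ 2 := by nlinarith
  have hα1 : L * Real.exp (-L) ≤ 1 := by nlinarith
  have hα0 : 0 ≤ L * Real.exp (-L) := by positivity
  set p : ℕ → ℝ := fun k => Real.exp (-L) * L ^ k / (Nat.factorial k) with hp
  have hp0 : ∀ k, 0 ≤ p k := fun k => by
    have : (0:ℝ) ≤ L ^ k := le_of_lt (pow_pos hL k)
    positivity
  have hpsum : Summable p := by
    rw [hp]
    simp_rw [mul_div_assoc]
    exact (Real.summable_pow_div_factorial L).mul_left _
  have hptot : ∑' k, p k = 1 := by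
    have h : ∀ k : ℕ, p k = Real.exp (-L) * (L ^ k / (Nat.factorial k)) := fun k =>
      mul_div_assoc _ _ _
    simp_rw [h]
    rw [tsum_mul_left]
    have : ∑' k : ℕ, L ^ k / (Nat.factorial k : ℝ) = Real.exp L := by
      rw [Real.exp_eq_exp_ℝ, NormedSpace.exp_eq_tsum_div]
    rw [this, hEmul]
  have hp0eq : p 0 = Real.exp (-L) := by simp [hp]
  have hp1eq : p 1 = L * Real.exp (-L) := by simp [hp]; ring
  refine tvDist_le fun A hA => ?_
  set μk : ℕ → Measure ℝ := fun k => μG.conv (convPow νY k) with hμk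
  set x : ℕ → ℝ := fun k => ((μk k) A).toReal with hx
  have hx0 : ∀ k, 0 ≤ x k := fun k => ENNReal.toReal_nonneg
  have hx1 : ∀ k, x k ≤ 1 := fun k => by
    simpa [hx] using ENNReal.toReal_mono (by simp) (prob_le_one (μ := μk k) (s := A))
  have hPA : ((Measure.sum fun k : ℕ =>
      (ENNReal.ofReal (p k)) • (μk k)) A).toReal = ∑' k, p k * x k := by
    rw [Measure.sum_apply _ hA]
    rw [ENNReal.tsum_toReal_eq (fun k => ?_)]
    · congr 1
      funext k
      rw [Measure.smul_apply, smul_eq_mul, ENNReal.toReal_mul, ENNReal.toReal_ofReal (hp0 k)]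
    · rw [Measure.smul_apply, smul_eq_mul]
      exact ENNReal.mul_ne_top ENNReal.ofReal_ne_top (measure_ne_top _ _)
  have hQA : ((ENNReal.ofReal (1 - L * Real.exp (-L)) • μG +
      ENNReal.ofReal (L * Real.exp (-L)) • (μG.conv νY)) A).toReal =
      (1 - L * Real.exp (-L)) * x 0 + (L * Real.exp (-L)) * x 1 := by
    have hx0eq : (μG A).toReal = x 0 := by simp [hx, hμk, convPow]
    have hx1eq : ((μG.conv νY) A).toReal = x 1 := by
      have : convPow νY 1 = νY := by
        show (convPow νY 0).conv νY = νY
        show (Measure.dirac 0).conv νY = νY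
        simp
      simp [hx, hμk, this]
    rw [Measure.add_apply, Measure.smul_apply, Measure.smul_apply, smul_eq_mul, smul_eq_mul,
      ENNReal.toReal_add (ENNReal.mul_ne_top ENNReal.ofReal_ne_top (measure_ne_top _ _))
        (ENNReal.mul_ne_top ENNReal.ofReal_ne_top (measure_ne_top _ _)),
      ENNReal.toReal_mul, ENNReal.toReal_mul, ENNReal.toReal_ofReal (by linarith),
      ENNReal.toReal_ofReal hα0, hx0eq, hx1eq]
  rw [hPA, hQA]
  -- summability
  have hs : Summable fun k => p k * x k :=
    Summable.of_nonneg_of_le (fun k => mul_nonneg (hp0 k) (hx0 k))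
      (fun k => by nlinarith [hp0 k, hx0 k, hx1 k]) hpsum
  have hs1 : Summable fun k => p (k + 1) * x (k + 1) := by
    exact_mod_cast (summable_nat_add_iff 1).mpr hs
  have hs2 : Summable fun k => p (k + 2) * x (k + 2) := by
    exact_mod_cast (summable_nat_add_iff 2).mpr hs
  have hps1 : Summable fun k => p (k + 1) := (summable_nat_add_iff 1).mpr hpsum
  have hps2 : Summable fun k => p (k + 2) := (summable_nat_add_iff 2).mpr hpsum
  have hsplit : ∑' k, p k * x k =
      p 0 * x 0 + p 1 * x 1 + ∑' k, p (k + 2) * x (k + 2) := by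
    rw [Summable.tsum_eq_zero_add hs, Summable.tsum_eq_zero_add hs1, ← add_assoc]
  have hpsplit : ∑' k, p (k + 2) = 1 - p 0 - p 1 := by
    have := Summable.tsum_eq_zero_add hpsum
    rw [Summable.tsum_eq_zero_add hps1] at this
    rw [hptot] at this
    linarith
  set T := ∑' k, p (k + 2) * x (k + 2) with hT
  have hT0 : 0 ≤ T := tsum_nonneg fun k => mul_nonneg (hp0 _) (hx0 _)
  have hTle : T ≤ 1 - p 0 - p 1 := by
    rw [← hpsplit]
    exact Summable.tsum_le_tsum (fun k => by nlinarith [hp0 (k+2), hx0 (k+2), hx1 (k+2)]) hs2 hps2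
  rw [hsplit]
  rw [abs_le]
  constructor <;> nlinarith [hx0 0, hx1 0, hx0 1, hx1 1]


/-- For each `i`, `Q_{N_i} * Q_{(Y,P_i)}` (the law of `N_i + Σ_{j=1}^{P_i} Y_j`, with
`N_i ~ N(m_i, σ_i²)`, `P_i` Poisson of parameter `λ_i > 0` and `(Y_j)` i.i.d. of law `νY`,
all independent) is a Poisson mixture of convolution powers, and `Q_{N_i} * Q_{(Y₁,ε_i)}`
(the law of `N_i + ε_i Y₁` with `ε_i` Bernoulli of parameter `α_i = λ_i e^{-λ_i}`) is the
corresponding Bernoulli mixture.  Then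
`‖⊗ᵢ (Q_{N_i} * Q_{(Y,P_i)}) - ⊗ᵢ (Q_{N_i} * Q_{(Y₁,ε_i)})‖_TV ≤ 2√(Σᵢ λ_i²)`. -/
theorem tvDist_pi_compoundPoisson_bernoulli {n : ℕ} (m : Fin n → ℝ) (σ : Fin n → ℝ)
    (l : Fin n → ℝ) (hσ : ∀ i, 0 < σ i) (hl : ∀ i, 0 < l i)
    (νY : Measure ℝ) [IsProbabilityMeasure νY] :
    tvDist
      (Measure.pi fun i =>
        Measure.sum fun k : ℕ =>
          (ENNReal.ofReal (Real.exp (-(l i)) * (l i) ^ k / (Nat.factorial k))) •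
            ((ProbabilityTheory.gaussianReal (m i) ⟨(σ i) ^ 2, sq_nonneg _⟩).conv
              (convPow νY k)))
      (Measure.pi fun i =>
        ENNReal.ofReal (1 - l i * Real.exp (-(l i))) •
            ProbabilityTheory.gaussianReal (m i) ⟨(σ i) ^ 2, sq_nonneg _⟩ +
          ENNReal.ofReal (l i * Real.exp (-(l i))) •
            ((ProbabilityTheory.gaussianReal (m i) ⟨(σ i) ^ 2, sq_nonneg _⟩).conv νY)) ≤
      2 * Real.sqrt (∑ i, (l i) ^ 2) := by
  have hS0 : (0:ℝ) ≤ ∑ i, (l i) ^ 2 := Finset.sum_nonneg fun i _ => sq_nonneg _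
  set P : Fin n → Measure ℝ := fun i =>
    Measure.sum fun k : ℕ =>
      (ENNReal.ofReal (Real.exp (-(l i)) * (l i) ^ k / (Nat.factorial k))) •
        ((ProbabilityTheory.gaussianReal (m i) ⟨(σ i) ^ 2, sq_nonneg _⟩).conv
          (convPow νY k)) with hP
  set Q : Fin n → Measure ℝ := fun i =>
    ENNReal.ofReal (1 - l i * Real.exp (-(l i))) •
        ProbabilityTheory.gaussianReal (m i) ⟨(σ i) ^ 2, sq_nonneg _⟩ +
      ENNReal.ofReal (l i * Real.exp (-(l i))) •
        ((ProbabilityTheory.gaussianReal (m i) ⟨(σ i) ^ 2, sq_nonneg _⟩).conv νY) with hQ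
  have ha : ∀ i, 0 ≤ l i * Real.exp (-(l i)) ∧ l i * Real.exp (-(l i)) ≤ 1 := by
    intro i
    have hE : 0 < Real.exp (-(l i)) := Real.exp_pos _
    have h1L : 1 + l i ≤ Real.exp (l i) := by have := Real.add_one_le_exp (l i); linarith
    have hEmul : Real.exp (-(l i)) * Real.exp (l i) = 1 := by rw [← Real.exp_add]; simp
    constructor
    · exact mul_nonneg (hl i).le hE.le
    · nlinarith [(hl i).le]
  haveI hG : ∀ i, IsProbabilityMeasure (ProbabilityTheory.gaussianReal (m i) ⟨(σ i) ^ 2, sq_nonneg _⟩) :=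
    fun i => ProbabilityTheory.instIsProbabilityMeasureGaussianReal _ _
  haveI hPi : ∀ i, IsProbabilityMeasure (P i) := fun i => poissonMix_isProb _ (hl i)
  haveI hQi : ∀ i, IsProbabilityMeasure (Q i) := fun i =>
    bernoulliMix_isProb _ _ (ha i).1 (ha i).2
  have h1 : tvDist (Measure.pi P) (Measure.pi Q) ≤ ∑ i, tvDist (P i) (Q i) :=
    tvDist_pi_le P Q
  have h2 : ∀ i, tvDist (P i) (Q i) ≤ (l i) ^ 2 := fun i => tvDist_coord _ _ (hl i)
  have h3 : tvDist (Measure.pi P) (Measure.pi Q) ≤ ∑ i, (l i) ^ 2 :=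
    h1.trans (Finset.sum_le_sum fun i _ => h2 i)
  by_cases hS : (∑ i, (l i) ^ 2) ≤ 1
  · have hs2 := Real.sq_sqrt hS0
    have hs3 := Real.sqrt_nonneg (∑ i, (l i) ^ 2)
    have hs4 : Real.sqrt (∑ i, (l i) ^ 2) ≤ 1 := by
      nlinarith [sq_nonneg (Real.sqrt (∑ i, (l i) ^ 2) - 1)]
    have hsq : (∑ i, (l i) ^ 2) ≤ Real.sqrt (∑ i, (l i) ^ 2) := by nlinarith
    linarith
  · have h4 : tvDist (Measure.pi P) (Measure.pi Q) ≤ 1 := tvDist_le_one _ _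
    have h5 : (1:ℝ) ≤ Real.sqrt (∑ i, (l i) ^ 2) := by
      rw [show (1:ℝ) = Real.sqrt 1 from Real.sqrt_one.symm]
      exact Real.sqrt_le_sqrt (by linarith)
    linarith
end TV
end

section
/- Let N ~ N(m, σ²) with |m| ≤ 1/3, α ∈ [0,1], and Y a discrete random variable taking values in ℤ independent of N. Let ε be Bernoulli(α) independent of (N, Y), and let Q be the law of N + εY. Define the Markov kernel K(x, A) = 1_A(x - [x]), where [x] is the nearest integer to x. Then ‖KQ - law(N)‖_TV ≤ (6/σ)φ(1/(6σ)) + 4Φ(-1/(6σ)), where φ and Φ are the standard normal density and CDF. -/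
open MeasureTheory ProbabilityTheory

/-- Standard normal density. -/
noncomputable def stdNormalPDF (t : ℝ) : ℝ :=
  (Real.sqrt (2 * Real.pi))⁻¹ * Real.exp (-t ^ 2 / 2)

/-- Standard normal cumulative distribution function. -/
noncomputable def stdNormalCDF (t : ℝ) : ℝ := ∫ u in Set.Iic t, stdNormalPDF u

lemma measurable_roundR : Measurable (fun x : ℝ => (round x : ℝ)) := by
  have h1 : Measurable (fun x : ℝ => (⌊x + 1/2⌋ : ℤ)) := (measurable_add_const _).floor
  have : Measurable (fun x : ℝ => round x) := by simpa [round_eq] using h1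
  exact measurable_from_top.comp this

lemma measurable_fround : Measurable (fun x : ℝ => x - (round x : ℝ)) :=
  measurable_id.sub measurable_roundR

lemma stdNormalPDF_nonneg (t : ℝ) : 0 ≤ stdNormalPDF t := by
  unfold stdNormalPDF; positivity

lemma stdNormalCDF_nonneg (t : ℝ) : 0 ≤ stdNormalCDF t :=
  setIntegral_nonneg measurableSet_Iic fun x _ => stdNormalPDF_nonneg x

lemma pdf_eq : gaussianPDFReal 0 1 = stdNormalPDF := by
  funext x
  simp [gaussianPDFReal, stdNormalPDF]

lemma g01_Iic (t : ℝ) :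
    gaussianReal 0 1 (Set.Iic t) = ENNReal.ofReal (stdNormalCDF t) := by
  rw [gaussianReal_apply_eq_integral 0 one_ne_zero, pdf_eq, stdNormalCDF]

lemma g01_neg : Measure.map (fun x : ℝ => -x) (gaussianReal 0 1) = gaussianReal 0 1 := by
  have := gaussianReal_map_const_mul (μ := 0) (v := 1) (-1)
  simp only [neg_one_mul, mul_zero] at this
  rw [this]
  congr 1
  · ext; norm_num

lemma g01_Ici (t : ℝ) :
    gaussianReal 0 1 (Set.Ici t) = ENNReal.ofReal (stdNormalCDF (-t)) := by
  have hp : (fun x : ℝ => -x) ⁻¹' Set.Ici t = Set.Iic (-t) := by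
    ext x
    simp only [Set.mem_preimage, Set.mem_Ici, Set.mem_Iic]
    constructor <;> intro h <;> linarith
  calc gaussianReal 0 1 (Set.Ici t)
      = (Measure.map (fun x : ℝ => -x) (gaussianReal 0 1)) (Set.Ici t) := by rw [g01_neg]
    _ = gaussianReal 0 1 (Set.Iic (-t)) := by
        rw [Measure.map_apply measurable_neg measurableSet_Ici, hp]
    _ = _ := g01_Iic _

lemma gauss_affine (m σ : ℝ) :
    gaussianReal m ⟨σ ^ 2, sq_nonneg σ⟩ =
      Measure.map (fun x : ℝ => σ * x + m) (gaussianReal 0 1) := by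
  have h1 : Measure.map (fun x : ℝ => σ * x) (gaussianReal 0 1)
      = gaussianReal 0 ⟨σ ^ 2, sq_nonneg σ⟩ := by
    have h := gaussianReal_map_const_mul (μ := 0) (v := 1) σ
    simp at h; exact h
  have h2 : (fun x : ℝ => σ * x + m) = (fun x : ℝ => x + m) ∘ (fun x : ℝ => σ * x) := rfl
  rw [h2, ← Measure.map_map (measurable_add_const m) (measurable_const_mul σ), h1,
    gaussianReal_map_add_const (μ := (0:ℝ)) (v := (⟨σ ^ 2, sq_nonneg σ⟩ : NNReal)) m, zero_add]

lemma gauss_Iic (m σ : ℝ) (hσ : 0 < σ) :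
    gaussianReal m ⟨σ ^ 2, sq_nonneg σ⟩ (Set.Iic (m - 1/6))
      = ENNReal.ofReal (stdNormalCDF (-1 / (6 * σ))) := by
  have hp : (fun x : ℝ => σ * x + m) ⁻¹' Set.Iic (m - 1/6) = Set.Iic (-1 / (6 * σ)) := by
    ext x
    simp only [Set.mem_preimage, Set.mem_Iic]
    have he : -1 / (6 * σ) = (-1/6) / σ := by ring
    rw [he, le_div_iff₀ hσ]
    constructor <;> intro h <;> nlinarith [mul_comm σ x]
  rw [gauss_affine, Measure.map_apply (by fun_prop) measurableSet_Iic, hp, g01_Iic]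

lemma gauss_Ici (m σ : ℝ) (hσ : 0 < σ) :
    gaussianReal m ⟨σ ^ 2, sq_nonneg σ⟩ (Set.Ici (m + 1/6))
      = ENNReal.ofReal (stdNormalCDF (-1 / (6 * σ))) := by
  have hp : (fun x : ℝ => σ * x + m) ⁻¹' Set.Ici (m + 1/6) = Set.Ici (1 / (6 * σ)) := by
    ext x
    simp only [Set.mem_preimage, Set.mem_Ici]
    have he : 1 / (6 * σ) = (1/6) / σ := by ring
    rw [he, div_le_iff₀ hσ]
    constructor <;> intro h <;> nlinarith [mul_comm σ x]
  rw [gauss_affine, Measure.map_apply (by fun_prop) measurableSet_Ici, hp, g01_Ici]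
  have he2 : -(1 / (6 * σ)) = -1 / (6 * σ) := by ring
  rw [he2]

/-- Let `N ~ N(m, σ²)` with `|m| ≤ 1/3`, `α ∈ [0,1]`, `Y` a `ℤ`-valued random variable
(of law the pushforward of `νZ` under `Int.cast`) independent of `N`, and `ε` a
Bernoulli(`α`) independent of `(N, Y)`; the law `Q` of `N + εY` is the mixture
`(1-α)•N(m,σ²) + α•(N(m,σ²) ∗ νY)`.  With the rounding kernel `K(x,A) = 1_A(x - [x])`,
`‖KQ - N(m,σ²)‖_TV ≤ (6/σ)φ(1/(6σ)) + 4Φ(-1/(6σ))`. -/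
theorem tvDist_rounding_kernel (m σ a : ℝ) (hσ : 0 < σ) (hm : |m| ≤ 1 / 3)
    (ha : a ∈ Set.Icc (0 : ℝ) 1) (νZ : Measure ℤ) [IsProbabilityMeasure νZ] :
    tvDist
      (Measure.map (fun x : ℝ => x - (round x : ℝ))
        (ENNReal.ofReal (1 - a) • gaussianReal m ⟨σ ^ 2, sq_nonneg σ⟩ +
          ENNReal.ofReal a •
            ((gaussianReal m ⟨σ ^ 2, sq_nonneg σ⟩).conv
              (Measure.map (fun k : ℤ => (k : ℝ)) νZ))))
      (gaussianReal m ⟨σ ^ 2, sq_nonneg σ⟩) ≤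
    (6 / σ) * stdNormalPDF (1 / (6 * σ)) + 4 * stdNormalCDF (-1 / (6 * σ)) := by
  obtain ⟨ha0, ha1⟩ := ha
  set μ : Measure ℝ := gaussianReal m ⟨σ ^ 2, sq_nonneg σ⟩ with hμ
  haveI : IsProbabilityMeasure μ := by
    rw [hμ]; exact instIsProbabilityMeasureGaussianReal m _
  set f : ℝ → ℝ := fun x => x - (round x : ℝ) with hf
  have hfm : Measurable f := measurable_fround
  have hcast : Measurable (fun k : ℤ => (k : ℝ)) := measurable_from_top
  -- Step A : rounding kills the convolution
  have hconv : Measure.map f (μ.conv (Measure.map (fun k : ℤ => (k : ℝ)) νZ))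
      = Measure.map f μ := by
    rw [Measure.conv]
    have hprod : μ.prod (Measure.map (fun k : ℤ => (k : ℝ)) νZ)
        = Measure.map (Prod.map id (fun k : ℤ => (k : ℝ))) (μ.prod νZ) := by
      have h := Measure.map_prod_map μ νZ measurable_id hcast
      simpa using h
    rw [hprod, Measure.map_map hfm measurable_add,
      Measure.map_map (hfm.comp measurable_add) (measurable_id.prodMap hcast)]
    have heq : (f ∘ (fun p : ℝ × ℝ => p.1 + p.2)) ∘ Prod.map id (fun k : ℤ => (k : ℝ))
        = f ∘ (Prod.fst : ℝ × ℤ → ℝ) := by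
      funext p
      obtain ⟨x, k⟩ := p
      simp only [Function.comp_apply, Prod.map, id_eq, hf]
      rw [round_add_intCast]
      push_cast
      ring
    rw [heq, ← Measure.map_map hfm measurable_fst, Measure.map_fst_prod]
    simp
  have hQ : Measure.map f
      (ENNReal.ofReal (1 - a) • μ + ENNReal.ofReal a •
        (μ.conv (Measure.map (fun k : ℤ => (k : ℝ)) νZ)))
      = Measure.map f μ := by
    rw [Measure.map_add _ _ hfm, Measure.map_smul, Measure.map_smul, hconv, ← add_smul]
    rw [← ENNReal.ofReal_add (by linarith) ha0]
    norm_num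
  rw [hQ]
  -- Step B : bound the TV distance by the mass outside (m - 1/6, m + 1/6)
  have hm1 : -(1/3 : ℝ) ≤ m := neg_le_of_abs_le hm
  have hm2 : m ≤ 1/3 := le_of_abs_le hm
  set E : Set ℝ := Set.Iic (m - 1/6) ∪ Set.Ici (m + 1/6) with hE
  have hfix : ∀ x : ℝ, x ∉ E → f x = x := by
    intro x hx
    simp only [hE, Set.mem_union, Set.mem_Iic, Set.mem_Ici, not_or, not_le] at hx
    have hr : round x = 0 := by
      rw [round_eq_zero_iff]
      constructor
      · linarith [hx.1]
      · linarith [hx.2]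
    simp [hf, hr]
  have hEval : (μ E).toReal ≤ 2 * stdNormalCDF (-1 / (6 * σ)) := by
    have hle : μ E ≤ ENNReal.ofReal (stdNormalCDF (-1 / (6 * σ)))
        + ENNReal.ofReal (stdNormalCDF (-1 / (6 * σ))) := by
      refine le_trans (measure_union_le _ _) ?_
      rw [hμ, gauss_Iic m σ hσ, gauss_Ici m σ hσ]
    calc (μ E).toReal ≤ (ENNReal.ofReal (stdNormalCDF (-1 / (6 * σ)))
        + ENNReal.ofReal (stdNormalCDF (-1 / (6 * σ)))).toReal := by
          refine ENNReal.toReal_mono ?_ hle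
          simp [ENNReal.add_ne_top]
      _ = 2 * stdNormalCDF (-1 / (6 * σ)) := by
          rw [ENNReal.toReal_add ENNReal.ofReal_ne_top ENNReal.ofReal_ne_top,
            ENNReal.toReal_ofReal (stdNormalCDF_nonneg _)]
          ring
  have hRHS : 0 ≤ (6 / σ) * stdNormalPDF (1 / (6 * σ)) + 4 * stdNormalCDF (-1 / (6 * σ)) := by
    have := stdNormalPDF_nonneg (1 / (6 * σ))
    have := stdNormalCDF_nonneg (-1 / (6 * σ))
    have h6 : (0:ℝ) ≤ 6 / σ := by positivity
    nlinarith
  refine Real.iSup_le ?_ hRHS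
  rintro ⟨A, hA⟩
  have hmap : Measure.map f μ A = μ (f ⁻¹' A) := Measure.map_apply hfm hA
  have h1 : μ (f ⁻¹' A) ≤ μ A + μ E := by
    refine le_trans (measure_mono ?_) (measure_union_le _ _)
    intro x hx
    by_cases hxE : x ∈ E
    · exact Or.inr hxE
    · exact Or.inl (by rwa [← hfix x hxE])
  have h2 : μ A ≤ μ (f ⁻¹' A) + μ E := by
    refine le_trans (measure_mono ?_) (measure_union_le _ _)
    intro x hx
    by_cases hxE : x ∈ E
    · exact Or.inr hxE
    · exact Or.inl (by simp only [Set.mem_preimage, hfix x hxE]; exact hx)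
  have hfin : ∀ s : Set ℝ, μ s ≠ ⊤ := fun s => measure_ne_top μ s
  have habs : |(Measure.map f μ A).toReal - (μ A).toReal| ≤ (μ E).toReal := by
    rw [hmap, abs_sub_le_iff]
    constructor
    · rw [sub_le_iff_le_add', ← ENNReal.toReal_add (hfin A) (hfin E)]
      exact ENNReal.toReal_mono (ENNReal.add_ne_top.2 ⟨hfin A, hfin E⟩) h1
    · rw [sub_le_iff_le_add', ← ENNReal.toReal_add (hfin _) (hfin E)]
      exact ENNReal.toReal_mono (ENNReal.add_ne_top.2 ⟨hfin _, hfin E⟩) h2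
  refine le_trans habs (le_trans hEval ?_)
  have hφ := stdNormalPDF_nonneg (1 / (6 * σ))
  have hΦ := stdNormalCDF_nonneg (-1 / (6 * σ))
  have h6 : (0:ℝ) ≤ 6 / σ := by positivity
  nlinarith
end

section
/- Let 0 = t₀ < t₁ < … < t_n = T, f continuous on [0,T], σ > 0 measurable. For each i choose γ_i, η_i ∈ [t_{i-1}, t_i] with ∫_{t_{i-1}}^{t_i} f = f(γ_i)(t_i - t_{i-1}) and ∫_{t_{i-1}}^{t_i} σ² = σ²(η_i)(t_i - t_{i-1}). Then Σ_{i=1}^n (f(t_i) - f(γ_i))²/(2σ²(η_i)) · (t_i - t_{i-1}) ≤ ∫_0^T (f(s) - f̄_n(s))²/(2σ²(s)) ds, where f̄_n(t) = f(t_i) for t ∈ [t_{i-1}, t_i). -/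
open MeasureTheory Set

lemma cs_integral {μ : MeasureTheory.Measure ℝ} {u v : ℝ → ℝ}
    (hu : MemLp u 2 μ) (hv : MemLp v 2 μ) :
    (∫ s, u s * v s ∂μ) ^ 2 ≤ (∫ s, u s ^ 2 ∂μ) * (∫ s, v s ^ 2 ∂μ) := by
  have hpq : (2 : ℝ).HolderConjugate 2 := Real.holderConjugate_iff.mpr ⟨by norm_num, by norm_num⟩
  have h2 : ENNReal.ofReal (2 : ℝ) = 2 := by norm_num
  have hH := MeasureTheory.integral_mul_norm_le_Lp_mul_Lq (f := u) (g := v) hpq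
    (by rwa [h2]) (by rwa [h2])
  have hkey : ∀ x : ℝ, ‖x‖ ^ (2 : ℝ) = x ^ 2 := fun x => by
    rw [show (2 : ℝ) = ((2 : ℕ) : ℝ) by norm_num, Real.rpow_natCast,
      Real.norm_eq_abs, sq_abs]
  simp_rw [hkey] at hH
  have hA : 0 ≤ ∫ s, u s ^ 2 ∂μ := integral_nonneg fun s => sq_nonneg _
  have hB : 0 ≤ ∫ s, v s ^ 2 ∂μ := integral_nonneg fun s => sq_nonneg _
  have habs : |∫ s, u s * v s ∂μ| ≤
      (∫ s, u s ^ 2 ∂μ) ^ (1 / 2 : ℝ) * (∫ s, v s ^ 2 ∂μ) ^ (1 / 2 : ℝ) := by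
    calc |∫ s, u s * v s ∂μ| ≤ ∫ s, ‖u s‖ * ‖v s‖ ∂μ := by
          simpa [Real.norm_eq_abs] using
            norm_integral_le_integral_norm (μ := μ) (fun s => u s * v s)
      _ ≤ _ := hH
  calc (∫ s, u s * v s ∂μ) ^ 2 = |∫ s, u s * v s ∂μ| ^ 2 := (sq_abs _).symm
    _ ≤ ((∫ s, u s ^ 2 ∂μ) ^ (1 / 2 : ℝ) * (∫ s, v s ^ 2 ∂μ) ^ (1 / 2 : ℝ)) ^ 2 :=
        pow_le_pow_left₀ (abs_nonneg _) habs 2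
    _ = (∫ s, u s ^ 2 ∂μ) * (∫ s, v s ^ 2 ∂μ) := by
        rw [mul_pow, ← Real.rpow_natCast ((∫ s, u s ^ 2 ∂μ) ^ (1 / 2 : ℝ)) 2,
          ← Real.rpow_natCast ((∫ s, v s ^ 2 ∂μ) ^ (1 / 2 : ℝ)) 2,
          ← Real.rpow_mul hA, ← Real.rpow_mul hB]
        norm_num

lemma interval_step {T : ℝ} {f σ fbar : ℝ → ℝ} (hf : ContinuousOn f (Set.Icc 0 T))
    (hσmeas : Measurable σ) (hσpos : ∀ s ∈ Set.Icc 0 T, 0 < σ s)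
    {A B : ℝ} (hAB : A < B) (hsub : Set.Icc A B ⊆ Set.Icc 0 T)
    {γi ηi : ℝ} (hηmem : ηi ∈ Set.Icc A B)
    (hγ : ∫ s in A..B, f s = f γi * (B - A))
    (hη : ∫ s in A..B, σ s ^ 2 = σ ηi ^ 2 * (B - A))
    (hfb : ∀ s ∈ Set.Ico A B, fbar s = f B)
    (hintAB : IntervalIntegrable (fun s => (f s - fbar s) ^ 2 / (2 * σ s ^ 2))
      volume A B)
    (hσintAB : IntervalIntegrable (fun s => σ s ^ 2) volume A B) :
    (f B - f γi) ^ 2 / (2 * σ ηi ^ 2) * (B - A) ≤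
      ∫ s in A..B, (f s - fbar s) ^ 2 / (2 * σ s ^ 2) := by
  have hABle : A ≤ B := hAB.le
  set μ' := volume.restrict (Set.Ioc A B) with hμ'
  set c := f B with hc
  have hIoc : Set.Ioc A B ⊆ Set.Icc 0 T := fun s hs => hsub ⟨hs.1.le, hs.2⟩
  have hneB : ∀ᵐ s ∂μ', s ≠ B := by
    refine ae_restrict_of_ae ?_
    rw [ae_iff]
    simpa using Real.volume_singleton (a := B)
  have hfb' : ∀ᵐ s ∂μ', fbar s = c := by
    filter_upwards [ae_restrict_mem measurableSet_Ioc, hneB] with s hs hne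
    exact hfb s ⟨hs.1.le, lt_of_le_of_ne hs.2 hne⟩
  have hInt_h : Integrable (fun s => (f s - fbar s) ^ 2 / (2 * σ s ^ 2)) μ' := hintAB.1
  have hintg : Integrable (fun s => (f s - c) ^ 2 / (2 * σ s ^ 2)) μ' := by
    refine hInt_h.congr ?_
    filter_upwards [hfb'] with s hs
    rw [hs]
  set u : ℝ → ℝ := fun s => (f s - c) / (Real.sqrt 2 * σ s) with hu_def
  set v : ℝ → ℝ := fun s => Real.sqrt 2 * σ s with hv_def
  have h2nn : (0 : ℝ) ≤ 2 := by norm_num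
  have hu2 : ∀ s, u s ^ 2 = (f s - c) ^ 2 / (2 * σ s ^ 2) := fun s => by
    rw [hu_def]; simp only []
    rw [div_pow, mul_pow, Real.sq_sqrt h2nn]
  have hv2 : ∀ s, v s ^ 2 = 2 * σ s ^ 2 := fun s => by
    rw [hv_def]; simp only []
    rw [mul_pow, Real.sq_sqrt h2nn]
  have hfae : AEMeasurable f μ' :=
    (hf.aemeasurable measurableSet_Icc).mono_measure
      (Measure.restrict_mono hIoc le_rfl)
  have hu : MemLp u 2 μ' := by
    refine (memLp_two_iff_integrable_sq ?_).2 ?_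
    · exact ((hfae.sub aemeasurable_const).div
        (aemeasurable_const.mul hσmeas.aemeasurable)).aestronglyMeasurable
    · exact hintg.congr (Filter.Eventually.of_forall fun s => (hu2 s).symm)
  have hσ2 : Integrable (fun s => σ s ^ 2) μ' := hσintAB.1
  have hv : MemLp v 2 μ' := by
    refine (memLp_two_iff_integrable_sq ?_).2 ?_
    · exact (aemeasurable_const.mul hσmeas.aemeasurable).aestronglyMeasurable
    · exact (hσ2.const_mul 2).congr (Filter.Eventually.of_forall fun s => (hv2 s).symm)
  have hCS := cs_integral hu hv
  have huv : ∀ᵐ s ∂μ', u s * v s = f s - c := by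
    filter_upwards [ae_restrict_mem measurableSet_Ioc] with s hs
    have hσne : σ s ≠ 0 := (hσpos s (hIoc hs)).ne'
    have hs2 : Real.sqrt 2 ≠ 0 := by positivity
    rw [hu_def, hv_def]; simp only []
    field_simp
  have hintf : IntervalIntegrable f volume A B := by
    apply ContinuousOn.intervalIntegrable
    rw [Set.uIcc_of_le hABle]
    exact hf.mono hsub
  have h1 : ∫ s, u s * v s ∂μ' = (f γi - c) * (B - A) := by
    rw [integral_congr_ae huv,
      show ∫ s, (f s - c) ∂μ' = ∫ s in A..B, (f s - c) from
        (intervalIntegral.integral_of_le hABle).symm,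
      intervalIntegral.integral_sub hintf intervalIntegrable_const, hγ,
      intervalIntegral.integral_const]
    simp [smul_eq_mul]; ring
  have h2 : ∫ s, u s ^ 2 ∂μ' =
      ∫ s in A..B, (f s - fbar s) ^ 2 / (2 * σ s ^ 2) := by
    rw [intervalIntegral.integral_of_le hABle]
    refine integral_congr_ae ?_
    filter_upwards [hfb'] with s hs
    rw [hu2 s, hs]
  have h3 : ∫ s, v s ^ 2 ∂μ' = 2 * (σ ηi ^ 2 * (B - A)) := by
    simp_rw [hv2]
    rw [integral_const_mul, ← intervalIntegral.integral_of_le hABle, hη]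
  rw [h1, h2, h3] at hCS
  have hs2pos : 0 < 2 * σ ηi ^ 2 := by
    have := hσpos ηi (hsub hηmem); positivity
  have hΔ : 0 < B - A := sub_pos.2 hAB
  rw [div_mul_eq_mul_div, div_le_iff₀ hs2pos]
  nlinarith [hCS, hΔ, sq_nonneg (f B - f γi)]

/-- Let `0 = t₀ < … < t_n = T`, `f` continuous on `[0,T]`, `σ > 0` measurable.  If for each
`i` the points `γ_i, η_i ∈ [t_{i-1}, t_i]` satisfy the mean-value identities
`∫_{t_{i-1}}^{t_i} f = f(γ_i)(t_i - t_{i-1})` and `∫_{t_{i-1}}^{t_i} σ² = σ²(η_i)(t_i - t_{i-1})`,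
and `f̄_n` is the piecewise-constant discretization (`f̄_n = f(t_i)` on `[t_{i-1}, t_i)`,
`f̄_n(T) = f(T)`), then
`Σᵢ (f(t_i) - f(γ_i))²/(2σ²(η_i)) · (t_i - t_{i-1}) ≤ ∫_0^T (f(s) - f̄_n(s))²/(2σ²(s)) ds`. -/
theorem riemann_sum_le_weighted_L2 {n : ℕ} (T : ℝ) (t : Fin (n + 1) → ℝ)
    (ht : StrictMono t) (ht0 : t 0 = 0) (htn : t (Fin.last n) = T)
    (f σ fbar : ℝ → ℝ) (hf : ContinuousOn f (Set.Icc 0 T)) (hσmeas : Measurable σ)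
    (hσpos : ∀ s ∈ Set.Icc 0 T, 0 < σ s)
    (γ η : Fin n → ℝ)
    (hγmem : ∀ i : Fin n, γ i ∈ Set.Icc (t i.castSucc) (t i.succ))
    (hηmem : ∀ i : Fin n, η i ∈ Set.Icc (t i.castSucc) (t i.succ))
    (hγ : ∀ i : Fin n, ∫ s in (t i.castSucc)..(t i.succ), f s =
      f (γ i) * (t i.succ - t i.castSucc))
    (hη : ∀ i : Fin n, ∫ s in (t i.castSucc)..(t i.succ), σ s ^ 2 =
      σ (η i) ^ 2 * (t i.succ - t i.castSucc))
    (hfbar : ∀ i : Fin n, ∀ s ∈ Set.Ico (t i.castSucc) (t i.succ), fbar s = f (t i.succ))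
    (hfbarT : fbar T = f T)
    (hint : IntervalIntegrable (fun s => (f s - fbar s) ^ 2 / (2 * σ s ^ 2))
      MeasureTheory.volume 0 T)
    (hσint : IntervalIntegrable (fun s => σ s ^ 2) MeasureTheory.volume 0 T) :
    ∑ i : Fin n, (f (t i.succ) - f (γ i)) ^ 2 / (2 * σ (η i) ^ 2) *
        (t i.succ - t i.castSucc) ≤
      ∫ s in (0 : ℝ)..T, (f s - fbar s) ^ 2 / (2 * σ s ^ 2) := by
  have h0T : ∀ j : Fin (n + 1), t j ∈ Set.Icc 0 T := fun j =>
    ⟨ht0 ▸ ht.monotone (Fin.zero_le j), htn ▸ ht.monotone (Fin.le_last j)⟩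
  have h0Tle : (0 : ℝ) ≤ T := by
    have := (h0T (Fin.last n)).1; rwa [htn] at this
  have hmono_sub : ∀ i : Fin n,
      Set.uIcc (t i.castSucc) (t i.succ) ⊆ Set.uIcc (0 : ℝ) T := by
    intro i
    rw [Set.uIcc_of_le (ht (Fin.castSucc_lt_succ : i.castSucc < i.succ)).le, Set.uIcc_of_le h0Tle]
    exact Set.Icc_subset_Icc (h0T i.castSucc).1 (h0T i.succ).2
  -- per-interval inequality
  have hstep : ∀ i : Fin n,
      (f (t i.succ) - f (γ i)) ^ 2 / (2 * σ (η i) ^ 2) * (t i.succ - t i.castSucc) ≤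
        ∫ s in (t i.castSucc)..(t i.succ), (f s - fbar s) ^ 2 / (2 * σ s ^ 2) := by
    intro i
    refine interval_step hf hσmeas hσpos (ht (Fin.castSucc_lt_succ : i.castSucc < i.succ)) ?_
      (hηmem i) (hγ i) (hη i) (hfbar i) (hint.mono_set (hmono_sub i))
      (hσint.mono_set (hmono_sub i))
    exact Set.Icc_subset_Icc (h0T i.castSucc).1 (h0T i.succ).2
  -- splitting the integral over the partition
  set p : ℕ → ℝ := fun k => t ⟨min k n, Nat.lt_succ_of_le (min_le_right _ _)⟩ with hp_def
  have hp : ∀ k (h : k ≤ n), p k = t ⟨k, Nat.lt_succ_of_le h⟩ := fun k h => by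
    simp only [hp_def, min_eq_left h]
  have hpint : ∀ k < n, IntervalIntegrable
      (fun s => (f s - fbar s) ^ 2 / (2 * σ s ^ 2)) volume (p k) (p (k + 1)) := by
    intro k hk
    refine hint.mono_set ?_
    rw [hp k (le_of_lt hk), hp (k + 1) hk, Set.uIcc_of_le
        (ht.monotone (by simp [Fin.le_def])), Set.uIcc_of_le h0Tle]
    exact Set.Icc_subset_Icc (h0T _).1 (h0T _).2
  have hsplit := intervalIntegral.sum_integral_adjacent_intervals hpint
  have hp0 : p 0 = 0 := by
    have h0 : (⟨0, Nat.lt_succ_of_le (Nat.zero_le n)⟩ : Fin (n + 1)) = 0 := by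
      ext; simp
    rw [hp 0 (Nat.zero_le n), h0, ht0]
  have hpn : p n = T := by
    rw [hp n le_rfl]; exact htn
  rw [hp0, hpn] at hsplit
  have hsum : ∑ i : Fin n, ∫ s in (t i.castSucc)..(t i.succ),
      (f s - fbar s) ^ 2 / (2 * σ s ^ 2) =
      ∫ s in (0 : ℝ)..T, (f s - fbar s) ^ 2 / (2 * σ s ^ 2) := by
    rw [← hsplit, ← Fin.sum_univ_eq_sum_range]
    refine Finset.sum_congr rfl fun i _ => ?_
    rw [hp i.1 i.2.le, hp (i.1 + 1) i.2]
    rfl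
  calc ∑ i : Fin n, (f (t i.succ) - f (γ i)) ^ 2 / (2 * σ (η i) ^ 2) *
        (t i.succ - t i.castSucc)
      ≤ ∑ i : Fin n, ∫ s in (t i.castSucc)..(t i.succ),
          (f s - fbar s) ^ 2 / (2 * σ s ^ 2) := Finset.sum_le_sum fun i _ => hstep i
    _ = _ := hsum
end
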